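/- arXiv:2111.09804 — 14 statements merged into one kernel-verified Lean document; each statement's English description precedes it below -/
import Mathlib

section
/- In a bisemigroup, each element has at most one left complement: if y and z are both ℓ-complements of an element x, then y = z. Likewise, each element has at most one right complement. -/
/-- A bisemigroup: a partially ordered set with two semigroup operations
`mul` and `add`, both monotone in each argument, satisfying the
hemidistributive laws. -/
structure BisemigroupOn (A : Type*) [PartialOrder A] where
  mul : A → A → A
  add : A → A → A
  mul_assoc : ∀ x y z, mul (mul x y) z = mul x (mul y z)
  add_assoc : ∀ x y z, add (add x y) z = add x (add y z)
  mul_mono_left : ∀ {x y : A} (z), x ≤ y → mul x z ≤ mul y z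
  mul_mono_right : ∀ {x y : A} (z), x ≤ y → mul z x ≤ mul z y
  add_mono_left : ∀ {x y : A} (z), x ≤ y → add x z ≤ add y z
  add_mono_right : ∀ {x y : A} (z), x ≤ y → add z x ≤ add z y
  hemi_left : ∀ x y z, mul x (add y z) ≤ add (mul x y) z
  hemi_right : ∀ x y z, mul (add x y) z ≤ add x (mul y z)

/-- `y` is a left complement (ℓ-complement) of `x`. -/
def BisemigroupOn.IsLeftCompl {A : Type*} [PartialOrder A]
    (S : BisemigroupOn A) (x y : A) : Prop :=
  ∀ w, S.add w (S.mul y x) ≤ w ∧ S.add (S.mul y x) w ≤ w ∧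
    w ≤ S.mul w (S.add x y) ∧ w ≤ S.mul (S.add x y) w

/-- `y` is a right complement (r-complement) of `x`. -/
def BisemigroupOn.IsRightCompl {A : Type*} [PartialOrder A]
    (S : BisemigroupOn A) (x y : A) : Prop :=
  ∀ w, S.add w (S.mul x y) ≤ w ∧ S.add (S.mul x y) w ≤ w ∧
    w ≤ S.mul w (S.add y x) ∧ w ≤ S.mul (S.add y x) w

/-- Each element of a bisemigroup has at most one ℓ-complement and at most
one r-complement. -/
theorem bisemigroup_compl_unique {A : Type*} [PartialOrder A]
    (S : BisemigroupOn A) (x y z : A) :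
    (S.IsLeftCompl x y → S.IsLeftCompl x z → y = z) ∧
    (S.IsRightCompl x y → S.IsRightCompl x z → y = z) := by
  constructor
  · intro hy hz
    have key : ∀ u v, S.IsLeftCompl x u → S.IsLeftCompl x v → u ≤ v := by
      intro u v hu hv
      calc u ≤ S.mul u (S.add x v) := (hv u).2.2.1
        _ ≤ S.add (S.mul u x) v := S.hemi_left u x v
        _ ≤ v := (hu v).2.1
    exact le_antisymm (key y z hy hz) (key z y hz hy)
  · intro hy hz
    have key : ∀ u v, S.IsRightCompl x u → S.IsRightCompl x v → u ≤ v := by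
      intro u v hu hv
      calc u ≤ S.mul (S.add v x) u := (hv u).2.2.2
        _ ≤ S.add v (S.mul x u) := S.hemi_right v x u
        _ ≤ v := (hu v).1
    exact le_antisymm (key y z hy hz) (key z y hz hy)
end

section
/- Residuation law for complements: in a bisemigroup, if r is a right complement of an element x, then for all y, z: x·y ≤ z if and only if y ≤ r + z. Dually, if l is a left complement of y, then for all x, z: x ≤ y + z if and only if l·x ≤ z. -/
/-- Residuation laws for complements in a bisemigroup. -/
theorem bisemigroup_residuation_for_complements {A : Type*} [PartialOrder A]
    (S : BisemigroupOn A) :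
    (∀ x r, S.IsRightCompl x r → ∀ y z, S.mul x y ≤ z ↔ y ≤ S.add r z) ∧
    (∀ y l, S.IsLeftCompl y l → ∀ x z, x ≤ S.add y z ↔ S.mul l x ≤ z) := by
  constructor
  · intro x r h y z
    constructor
    · intro hxy
      calc y ≤ S.mul (S.add r x) y := (h y).2.2.2
        _ ≤ S.add r (S.mul x y) := S.hemi_right r x y
        _ ≤ S.add r z := S.add_mono_right r hxy
    · intro hy
      calc S.mul x y ≤ S.mul x (S.add r z) := S.mul_mono_right x hy
        _ ≤ S.add (S.mul x r) z := S.hemi_left x r z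
        _ ≤ z := (h z).2.1
  · intro y l h x z
    constructor
    · intro hx
      calc S.mul l x ≤ S.mul l (S.add y z) := S.mul_mono_right l hx
        _ ≤ S.add (S.mul l y) z := S.hemi_left l y z
        _ ≤ z := (h z).2.1
    · intro hlx
      calc x ≤ S.mul (S.add y l) x := (h x).2.2.2
        _ ≤ S.add y (S.mul l x) := S.hemi_right y l x
        _ ≤ S.add y z := S.add_mono_right y hlx
end

section
/- De Morgan law for bisemigroups: in a bisemigroup, if p is an ℓ-complement of x and q is an ℓ-complement of y, then q + p is an ℓ-complement of x·y. Moreover, complementation is antitone: if x ≤ y and both have ℓ-complements p and q respectively, then q ≤ p. -/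
/-- De Morgan law for ℓ-complements in a bisemigroup, and antitonicity of
ℓ-complementation. -/
theorem bisemigroup_deMorgan_and_antitone {A : Type*} [PartialOrder A]
    (S : BisemigroupOn A) :
    (∀ x y p q, S.IsLeftCompl x p → S.IsLeftCompl y q →
      S.IsLeftCompl (S.mul x y) (S.add q p)) ∧
    (∀ x y p q, x ≤ y → S.IsLeftCompl x p → S.IsLeftCompl y q → q ≤ p) := by
  constructor
  · intro x y p q hp hq w
    -- (q+p)·(x·y) ≤ q·y
    have key : S.mul (S.add q p) (S.mul x y) ≤ S.mul q y := by
      calc S.mul (S.add q p) (S.mul x y)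
          = S.mul (S.mul (S.add q p) x) y := (S.mul_assoc _ _ _).symm
        _ ≤ S.mul (S.add q (S.mul p x)) y :=
            S.mul_mono_left _ (S.hemi_right q p x)
        _ ≤ S.mul q y := S.mul_mono_left _ (hp q).1
    -- x·y + (q+p) dominates:
    have hx : x ≤ S.mul x (S.add y q) := (hq x).2.2.1
    have hsum : S.add x p ≤ S.add (S.mul x y) (S.add q p) := by
      calc S.add x p ≤ S.add (S.mul x (S.add y q)) p := S.add_mono_left _ hx
        _ ≤ S.add (S.add (S.mul x y) q) p :=
            S.add_mono_left _ (S.hemi_left x y q)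
        _ = S.add (S.mul x y) (S.add q p) := S.add_assoc _ _ _
    refine ⟨?_, ?_, ?_, ?_⟩
    · exact le_trans (S.add_mono_right _ key) (hq w).1
    · exact le_trans (S.add_mono_left _ key) (hq w).2.1
    · exact le_trans (hp w).2.2.1 (S.mul_mono_right _ hsum)
    · exact le_trans (hp w).2.2.2 (S.mul_mono_left _ hsum)
  · intro x y p q hxy hp hq
    calc q ≤ S.mul q (S.add x p) := (hp q).2.2.1
      _ ≤ S.mul q (S.add y p) := S.mul_mono_right _ (S.add_mono_left _ hxy)
      _ ≤ S.add (S.mul q y) p := S.hemi_left q y p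
      _ ≤ p := (hq p).2.1
end

section
/- Hemidistributivity in involutive residuated posemigroups: let ⟨A, ≤, ·⟩ be a partially ordered semigroup with multiplication monotone in each argument, equipped with two maps ℓ, r: A → A satisfying ℓ(r(x)) = x = r(ℓ(x)) and the residuation laws x·y ≤ z ⟺ y ≤ r(ℓ(z)·x) and x·y ≤ z ⟺ x ≤ ℓ(y·r(z)) for all x, y, z. Define x + y := r(ℓ(y)·ℓ(x)). Then the hemidistributive law x·(y+z) ≤ (x·y)+z holds for all x, y, z. -/
/-- Hemidistributivity in involutive residuated posemigroups: with
`x + y := r (l y * l x)`, the law `x * (y + z) ≤ (x * y) + z` holds. -/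
theorem involutive_posemigroup_hemidistributivity {A : Type*} [PartialOrder A]
    (mul : A → A → A)
    (mul_assoc : ∀ x y z, mul (mul x y) z = mul x (mul y z))
    (mul_mono_left : ∀ {x y : A} (z), x ≤ y → mul x z ≤ mul y z)
    (mul_mono_right : ∀ {x y : A} (z), x ≤ y → mul z x ≤ mul z y)
    (l r : A → A)
    (lr : ∀ x, l (r x) = x) (rl : ∀ x, r (l x) = x)
    (res₁ : ∀ x y z, mul x y ≤ z ↔ y ≤ r (mul (l z) x))
    (res₂ : ∀ x y z, mul x y ≤ z ↔ x ≤ l (mul y (r z)))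
    (x y z : A) :
    mul x (r (mul (l z) (l y))) ≤ r (mul (l z) (l (mul x y))) := by
  have h1 : mul (l (mul x y)) x ≤ l y := by
    rw [res₂, rl]
  rw [← res₁, ← mul_assoc]
  calc mul (mul (l (mul x y)) x) (r (mul (l z) (l y)))
      ≤ mul (l y) (r (mul (l z) (l y))) := mul_mono_left _ h1
    _ ≤ z := (res₁ _ _ _).mpr le_rfl
end

section
/- Let A be a Brouwerian algebra with a distinguished element 0, and define x + y := (0 ⇨ (x ⊓ y)) ⊓ (x ⊔ y). Then + is commutative and associative, 0 is a unit for + (x + 0 = x for all x), and the hemidistributive law x ⊓ (y + z) ≤ (x ⊓ y) + z holds for all x, y, z. In particular, moreover, x + (y + z) = (0 ⇨ (x ⊓ y ⊓ z)) ⊓ (x ⊔ y ⊔ z). -/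
/-- In a Brouwerian algebra (generalized Heyting algebra) with a distinguished
element `z0`, the operation `x + y := (z0 ⇨ (x ⊓ y)) ⊓ (x ⊔ y)` is commutative
and associative, has `z0` as a unit, satisfies the hemidistributive law, and
`x + (y + z) = (z0 ⇨ (x ⊓ y ⊓ z)) ⊓ (x ⊔ y ⊔ z)`. -/
theorem pointed_brouwerian_bimonoid {A : Type*} [GeneralizedHeytingAlgebra A]
    (z0 : A) :
    let add : A → A → A := fun x y => (z0 ⇨ (x ⊓ y)) ⊓ (x ⊔ y)
    (∀ x y, add x y = add y x) ∧
    (∀ x y z, add (add x y) z = add x (add y z)) ∧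
    (∀ x, add x z0 = x) ∧
    (∀ x y z, x ⊓ add y z ≤ add (x ⊓ y) z) ∧
    (∀ x y z, add x (add y z) = (z0 ⇨ (x ⊓ y ⊓ z)) ⊓ (x ⊔ y ⊔ z)) := by
  intro add
  have hcomm : ∀ x y : A, add x y = add y x := by
    intro x y
    simp only [add, inf_comm x y, sup_comm x y]
  have hformula : ∀ x y z : A,
      add x (add y z) = (z0 ⇨ (x ⊓ y ⊓ z)) ⊓ (x ⊔ y ⊔ z) := by
    intro x y z
    show (z0 ⇨ (x ⊓ ((z0 ⇨ (y ⊓ z)) ⊓ (y ⊔ z)))) ⊓ (x ⊔ ((z0 ⇨ (y ⊓ z)) ⊓ (y ⊔ z)))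
        = (z0 ⇨ (x ⊓ y ⊓ z)) ⊓ (x ⊔ y ⊔ z)
    have e1 : z0 ⇨ (x ⊓ ((z0 ⇨ (y ⊓ z)) ⊓ (y ⊔ z)))
        = (z0 ⇨ (x ⊓ y ⊓ z)) ⊓ (z0 ⇨ (y ⊔ z)) := by
      simp only [himp_inf_distrib, himp_himp, inf_idem, inf_assoc]
    have e2 : x ⊔ ((z0 ⇨ (y ⊓ z)) ⊓ (y ⊔ z))
        = (x ⊔ (z0 ⇨ (y ⊓ z))) ⊓ (x ⊔ y ⊔ z) := by
      rw [sup_inf_left, sup_assoc]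
    rw [e1, e2]
    apply le_antisymm
    · exact le_inf (inf_le_left.trans inf_le_left) (inf_le_right.trans inf_le_right)
    · refine le_inf (le_inf inf_le_left ?_) (le_inf ?_ inf_le_right)
      · exact inf_le_left.trans
          (himp_le_himp_left ((inf_le_left.trans inf_le_right).trans le_sup_left))
      · exact (inf_le_left.trans
          (himp_le_himp_left
            (le_inf (inf_le_left.trans inf_le_right) inf_le_right))).trans le_sup_right
  have hassoc : ∀ x y z : A, add (add x y) z = add x (add y z) := by
    intro x y z
    rw [hcomm, hformula, hformula]
    rw [show z ⊓ x ⊓ y = x ⊓ y ⊓ z by ac_rfl, show z ⊔ x ⊔ y = x ⊔ y ⊔ z by ac_rfl]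
  have hunit : ∀ x : A, add x z0 = x := by
    intro x
    show (z0 ⇨ (x ⊓ z0)) ⊓ (x ⊔ z0) = x
    rw [himp_inf_distrib, himp_self, inf_top_eq]
    apply le_antisymm
    · rw [inf_sup_left]
      exact sup_le inf_le_right himp_inf_le
    · exact le_inf le_himp le_sup_left
  refine ⟨hcomm, hassoc, hunit, ?_, hformula⟩
  intro x y z
  show x ⊓ ((z0 ⇨ (y ⊓ z)) ⊓ (y ⊔ z)) ≤ (z0 ⇨ (x ⊓ y ⊓ z)) ⊓ ((x ⊓ y) ⊔ z)
  refine le_inf ?_ ?_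
  · calc x ⊓ ((z0 ⇨ (y ⊓ z)) ⊓ (y ⊔ z)) ≤ x ⊓ (z0 ⇨ (y ⊓ z)) :=
        inf_le_inf_left _ inf_le_left
      _ ≤ (z0 ⇨ x) ⊓ (z0 ⇨ (y ⊓ z)) := inf_le_inf_right _ le_himp
      _ = z0 ⇨ (x ⊓ (y ⊓ z)) := (himp_inf_distrib _ _ _).symm
      _ = z0 ⇨ (x ⊓ y ⊓ z) := by rw [inf_assoc]
  · calc x ⊓ ((z0 ⇨ (y ⊓ z)) ⊓ (y ⊔ z)) ≤ x ⊓ (y ⊔ z) :=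
        inf_le_inf_left _ inf_le_right
      _ = (x ⊓ y) ⊔ (x ⊓ z) := inf_sup_left _ _ _
      _ ≤ (x ⊓ y) ⊔ z := sup_le_sup_left inf_le_right _
end

section
/- Nuclearity lemma for involutive frames: in an involutive frame, for all subsets X₁, X₂ of L one has (X₁^▷◁) ∘ (X₂^▷◁) ⊆ (X₁ ∘ X₂)^▷◁, and consequently ((X₁^▷◁) ∘ X₂)^▷ = (X₁ ∘ X₂)^▷ = (X₁ ∘ (X₂^▷◁))^▷, where X₁ ∘ X₂ := {x₁ ∘ x₂ : x₁ ∈ X₁, x₂ ∈ X₂}. -/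
/-- An involutive frame: monoids `⟨L, mul, one⟩` and `⟨R, add, zero⟩`, maps
`lm, rm : L → R` and `la, ra : R → L`, and a relation `rel ⊆ L × R`
satisfying nuclearity. -/
structure InvFrame (L R : Type*) where
  mul : L → L → L
  one : L
  add : R → R → R
  zero : R
  mul_assoc : ∀ x y z, mul (mul x y) z = mul x (mul y z)
  one_mul : ∀ x, mul one x = x
  mul_one : ∀ x, mul x one = x
  add_assoc : ∀ x y z, add (add x y) z = add x (add y z)
  zero_add : ∀ x, add zero x = x
  add_zero : ∀ x, add x zero = x
  lm : L → R
  rm : L → R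
  la : R → L
  ra : R → L
  rel : L → R → Prop
  nuc_mul_left : ∀ x y z, rel x (add z (lm y)) ↔ rel (mul x y) z
  nuc_mul_right : ∀ x y z, rel (mul x y) z ↔ rel y (add (rm x) z)
  nuc_add_left : ∀ x y z, rel (mul x (ra z)) y ↔ rel x (add y z)
  nuc_add_right : ∀ x y z, rel x (add y z) ↔ rel (mul (la y) x) z

/-- The polarity operator `X ↦ X^▷` sending subsets of `L` to subsets of `R`. -/
def InvFrame.tri {L R : Type*} (F : InvFrame L R) (X : Set L) : Set R :=
  {y | ∀ x ∈ X, F.rel x y}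

/-- The polarity operator `Y ↦ Y^◁` sending subsets of `R` to subsets of `L`. -/
def InvFrame.tril {L R : Type*} (F : InvFrame L R) (Y : Set R) : Set L :=
  {x | ∀ y ∈ Y, F.rel x y}

/-- The complex multiplication `X₁ ∘ X₂ = {x₁ ∘ x₂ : x₁ ∈ X₁, x₂ ∈ X₂}`. -/
def InvFrame.smul {L R : Type*} (F : InvFrame L R) (X₁ X₂ : Set L) : Set L :=
  Set.image2 F.mul X₁ X₂

/-- Nuclearity lemma for involutive frames:
`X₁^▷◁ ∘ X₂^▷◁ ⊆ (X₁ ∘ X₂)^▷◁` and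
`(X₁^▷◁ ∘ X₂)^▷ = (X₁ ∘ X₂)^▷ = (X₁ ∘ X₂^▷◁)^▷`. -/
theorem invFrame_nuclearity {L R : Type*} (F : InvFrame L R) (X₁ X₂ : Set L) :
    F.smul (F.tril (F.tri X₁)) (F.tril (F.tri X₂)) ⊆
      F.tril (F.tri (F.smul X₁ X₂)) ∧
    F.tri (F.smul (F.tril (F.tri X₁)) X₂) = F.tri (F.smul X₁ X₂) ∧
    F.tri (F.smul X₁ (F.tril (F.tri X₂))) = F.tri (F.smul X₁ X₂) := by
  have key : ∀ z ∈ F.tri (F.smul X₁ X₂), ∀ x₁ ∈ F.tril (F.tri X₁),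
      ∀ x₂ ∈ F.tril (F.tri X₂), F.rel (F.mul x₁ x₂) z := by
    intro z hz x₁ hx₁ x₂ hx₂
    rw [← F.nuc_mul_left]
    apply hx₁
    intro x₁' hx₁'
    rw [F.nuc_mul_left, F.nuc_mul_right]
    apply hx₂
    intro x₂' hx₂'
    rw [← F.nuc_mul_right]
    exact hz _ (Set.mem_image2_of_mem hx₁' hx₂')
  have sub : ∀ X : Set L, X ⊆ F.tril (F.tri X) := fun X x hx y hy => hy x hx
  refine ⟨?_, ?_, ?_⟩
  · rintro _ ⟨x₁, hx₁, x₂, hx₂, rfl⟩ z hz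
    exact key z hz x₁ hx₁ x₂ hx₂
  · apply Set.Subset.antisymm
    · rintro z hz _ ⟨x₁, hx₁, x₂, hx₂, rfl⟩
      exact hz _ (Set.mem_image2_of_mem (sub X₁ hx₁) hx₂)
    · rintro z hz _ ⟨x₁, hx₁, x₂, hx₂, rfl⟩
      exact key z hz x₁ hx₁ x₂ (sub X₂ hx₂)
  · apply Set.Subset.antisymm
    · rintro z hz _ ⟨x₁, hx₁, x₂, hx₂, rfl⟩
      exact hz _ (Set.mem_image2_of_mem hx₁ (sub X₂ hx₂))
    · rintro z hz _ ⟨x₁, hx₁, x₂, hx₂, rfl⟩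
      exact key z hz x₁ (sub X₁ hx₁) x₂ hx₂
end

section
/- Hemidistributivity for involutive frames: in an involutive frame, for all u, v ∈ L, x, y ∈ R and X ⊆ L: if u ∘ s ⊑ x for every s ∈ X and v ⊑ t ⊕ y for every t ∈ X^▷, then u ∘ v ⊑ x ⊕ y. -/
/-- Hemidistributivity for involutive frames: if `u ∘ s ⊑ x` for all `s ∈ X`
and `v ⊑ t ⊕ y` for all `t ∈ X^▷`, then `u ∘ v ⊑ x ⊕ y`. -/
theorem invFrame_hemidistributivity {L R : Type*} (F : InvFrame L R)
    (u v : L) (x y : R) (X : Set L)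
    (h1 : ∀ s ∈ X, F.rel (F.mul u s) x)
    (h2 : ∀ t ∈ F.tri X, F.rel v (F.add t y)) :
    F.rel (F.mul u v) (F.add x y) := by
  have ht : F.add (F.rm u) x ∈ F.tri X := fun s hs =>
    (F.nuc_mul_right u s x).mp (h1 s hs)
  have := h2 _ ht
  rw [F.add_assoc] at this
  exact (F.nuc_mul_right u v (F.add x y)).mpr this
end

section
/- A commutative Δ₁-extension preserves all admissible joins: if ι: A → B exhibits B as a commutative Δ₁-extension of A, and a = ⋁X is a join in A that is admissible (i.e., a·y = ⋁{x·y : x ∈ X} for every y ∈ A), then ι(a) is the join of ι[X] in B. Dually for admissible meets. -/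
/-- A commutative bimonoid: a partially ordered set with two commutative
monoid operations, a multiplication `mul` with unit `one` and an addition
`add` with unit `zero`, both monotone in each argument, satisfying the
hemidistributive law `x·(y+z) ≤ (x·y)+z`. -/
structure CommBimonoidOn (A : Type*) [PartialOrder A] where
  mul : A → A → A
  add : A → A → A
  one : A
  zero : A
  mul_assoc : ∀ x y z, mul (mul x y) z = mul x (mul y z)
  mul_comm : ∀ x y, mul x y = mul y x
  mul_one : ∀ x, mul x one = x
  add_assoc : ∀ x y z, add (add x y) z = add x (add y z)
  add_comm : ∀ x y, add x y = add y x
  add_zero : ∀ x, add x zero = x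
  mul_mono : ∀ {x y : A} (z), x ≤ y → mul x z ≤ mul y z
  add_mono : ∀ {x y : A} (z), x ≤ y → add x z ≤ add y z
  hemi : ∀ x y z, mul x (add y z) ≤ add (mul x y) z

/-- `c` is a complement of `a` in the commutative bimonoid `S`. -/
def CommBimonoidOn.IsCompl {A : Type*} [PartialOrder A]
    (S : CommBimonoidOn A) (a c : A) : Prop :=
  S.mul a c ≤ S.zero ∧ S.one ≤ S.add a c

/-- `B` (with bimonoid structure `SB`) is a commutative Δ₁-extension of `A`
(with bimonoid structure `SA`) via `ι`: `ι` is an order embedding which is a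
homomorphism for `·, 1, +, 0`, elements of the form `ι a · (ι b)⁻` are join
dense, and elements of the form `ι a + (ι b)⁻` are meet dense. -/
structure IsDeltaOneExt {A B : Type*} [PartialOrder A] [PartialOrder B]
    (SA : CommBimonoidOn A) (SB : CommBimonoidOn B) (ι : A → B) : Prop where
  emb : ∀ a a' : A, a ≤ a' ↔ ι a ≤ ι a'
  map_mul : ∀ a a', ι (SA.mul a a') = SB.mul (ι a) (ι a')
  map_one : ι SA.one = SB.one
  map_add : ∀ a a', ι (SA.add a a') = SB.add (ι a) (ι a')
  map_zero : ι SA.zero = SB.zero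
  join_dense : ∀ x : B, ∃ S : Set B, IsLUB S x ∧
    ∀ s ∈ S, ∃ a b c, SB.IsCompl (ι b) c ∧ s = SB.mul (ι a) c
  meet_dense : ∀ x : B, ∃ S : Set B, IsGLB S x ∧
    ∀ s ∈ S, ∃ a b c, SB.IsCompl (ι b) c ∧ s = SB.add (ι a) c

/-- A commutative Δ₁-extension preserves all admissible joins and all
admissible meets. -/
theorem deltaOneExt_preserves_admissible {A B : Type*}
    [PartialOrder A] [PartialOrder B]
    (SA : CommBimonoidOn A) (SB : CommBimonoidOn B) (ι : A → B)
    (hext : IsDeltaOneExt SA SB ι) :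
    (∀ (a : A) (X : Set A), IsLUB X a →
      (∀ y : A, IsLUB ((fun x => SA.mul x y) '' X) (SA.mul a y)) →
      IsLUB (ι '' X) (ι a)) ∧
    (∀ (a : A) (X : Set A), IsGLB X a →
      (∀ y : A, IsGLB ((fun x => SA.add x y) '' X) (SA.add a y)) →
      IsGLB (ι '' X) (ι a)) := by
  obtain ⟨emb, map_mul, map_one, map_add, map_zero, jd, md⟩ := hext
  constructor
  · intro a X hX hadm
    constructor
    · rintro _ ⟨x, hx, rfl⟩
      exact (emb x a).mp (hX.1 hx)
    · intro u hu
      obtain ⟨S, hS, hform⟩ := md u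
      apply hS.2
      intro t ht
      obtain ⟨p, q, d, ⟨hd1, hd2⟩, rfl⟩ := hform t ht
      have hub : u ≤ SB.add (ι p) d := hS.1 ht
      have hxq : ∀ x ∈ X, SA.mul x q ≤ p := by
        intro x hx
        have h1 : ι x ≤ SB.add (ι p) d := le_trans (hu ⟨x, hx, rfl⟩) hub
        have h0 : SB.mul (ι x) (ι q) ≤ SB.mul (SB.add (ι p) d) (ι q) :=
          SB.mul_mono _ h1
        have h2 : SB.mul (SB.add (ι p) d) (ι q) ≤ ι p := by
          calc SB.mul (SB.add (ι p) d) (ι q)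
              = SB.mul (ι q) (SB.add d (ι p)) := by rw [SB.mul_comm, SB.add_comm]
            _ ≤ SB.add (SB.mul (ι q) d) (ι p) := SB.hemi _ _ _
            _ ≤ SB.add SB.zero (ι p) := SB.add_mono _ hd1
            _ = ι p := by rw [SB.add_comm, SB.add_zero]
        have h3 := le_trans h0 h2
        rw [← map_mul] at h3
        exact (emb _ _).mpr h3
      have haq : SA.mul a q ≤ p :=
        (hadm q).2 (by rintro _ ⟨x, hx, rfl⟩; exact hxq x hx)
      calc ι a = SB.mul (ι a) SB.one := (SB.mul_one _).symm
        _ ≤ SB.mul (ι a) (SB.add (ι q) d) := by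
            rw [SB.mul_comm (ι a) SB.one, SB.mul_comm (ι a) (SB.add (ι q) d)]
            exact SB.mul_mono _ hd2
        _ ≤ SB.add (SB.mul (ι a) (ι q)) d := SB.hemi _ _ _
        _ ≤ SB.add (ι p) d := by
            refine SB.add_mono _ ?_
            rw [← map_mul]
            exact (emb _ _).mp haq
  · intro a X hX hadm
    constructor
    · rintro _ ⟨x, hx, rfl⟩
      exact (emb a x).mp (hX.1 hx)
    · intro u hu
      obtain ⟨S, hS, hform⟩ := jd u
      apply hS.2
      intro s hs
      obtain ⟨p, q, c, ⟨hc1, hc2⟩, rfl⟩ := hform s hs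
      have hlb : SB.mul (ι p) c ≤ u := hS.1 hs
      have hxq : ∀ x ∈ X, p ≤ SA.add x q := by
        intro x hx
        have h1 : SB.mul (ι p) c ≤ ι x := le_trans hlb (hu ⟨x, hx, rfl⟩)
        have h2 : ι p ≤ SB.add (SB.mul (ι p) c) (ι q) := by
          calc ι p = SB.mul (ι p) SB.one := (SB.mul_one _).symm
            _ ≤ SB.mul (ι p) (SB.add c (ι q)) := by
                rw [SB.mul_comm (ι p) SB.one, SB.mul_comm (ι p) (SB.add c (ι q))]
                exact SB.mul_mono _ (le_trans hc2 (le_of_eq (SB.add_comm _ _)))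
            _ ≤ SB.add (SB.mul (ι p) c) (ι q) := SB.hemi _ _ _
        have h3 : ι p ≤ SB.add (ι x) (ι q) := le_trans h2 (SB.add_mono _ h1)
        rw [← map_add] at h3
        exact (emb _ _).mpr h3
      have haq : p ≤ SA.add a q :=
        (hadm q).2 (by rintro _ ⟨x, hx, rfl⟩; exact hxq x hx)
      calc SB.mul (ι p) c ≤ SB.mul (SB.add (ι a) (ι q)) c := by
            refine SB.mul_mono _ ?_
            rw [← map_add]
            exact (emb _ _).mp haq
        _ = SB.mul c (SB.add (ι q) (ι a)) := by rw [SB.mul_comm, SB.add_comm]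
        _ ≤ SB.add (SB.mul c (ι q)) (ι a) := SB.hemi _ _ _
        _ ≤ SB.add SB.zero (ι a) := by
            refine SB.add_mono _ ?_
            rw [SB.mul_comm]
            exact hc1
        _ = ι a := by rw [SB.add_comm, SB.add_zero]
end

section
/- Commutative Δ₁-extensions are essential: let ι: A → B exhibit B as a commutative Δ₁-extension of A, and let h: B → C be a monotone map into a commutative bimonoid C preserving ·, 1, +, 0. If the composite h ∘ ι is an order embedding (h(ι(a)) ≤ h(ι(a')) implies a ≤ a'), then h itself is an order embedding. -/
lemma CommBimonoidOn.IsCompl.symm {X : Type*} [PartialOrder X]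
    {S : CommBimonoidOn X} {b c : X} (hbc : S.IsCompl b c) : S.IsCompl c b :=
  ⟨by rw [S.mul_comm]; exact hbc.1, by rw [S.add_comm]; exact hbc.2⟩

/-- Residuation: if `c` complements `b` then `x·c ≤ t ↔ x ≤ b + t`. -/
lemma CommBimonoidOn.res {X : Type*} [PartialOrder X]
    (S : CommBimonoidOn X) {b c : X} (hbc : S.IsCompl b c) (x t : X) :
    S.mul x c ≤ t ↔ x ≤ S.add b t := by
  constructor
  · intro hle
    calc x = S.mul x S.one := (S.mul_one x).symm
      _ = S.mul S.one x := S.mul_comm _ _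
      _ ≤ S.mul (S.add b c) x := S.mul_mono x hbc.2
      _ = S.mul x (S.add c b) := by rw [S.mul_comm, S.add_comm]
      _ ≤ S.add (S.mul x c) b := S.hemi x c b
      _ ≤ S.add t b := S.add_mono b hle
      _ = S.add b t := S.add_comm _ _
  · intro hle
    calc S.mul x c ≤ S.mul (S.add b t) c := S.mul_mono c hle
      _ = S.mul c (S.add b t) := S.mul_comm _ _
      _ ≤ S.add (S.mul c b) t := S.hemi c b t
      _ ≤ S.add S.zero t := S.add_mono t (by rw [S.mul_comm]; exact hbc.1)
      _ = S.add t S.zero := S.add_comm _ _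
      _ = t := S.add_zero t

/-- Key equivalence: `a·c ≤ a' + c' ↔ a·b' ≤ b + a'` when `c` complements `b`
and `c'` complements `b'`. -/
lemma CommBimonoidOn.key {X : Type*} [PartialOrder X]
    (S : CommBimonoidOn X) {b c b' c' : X}
    (h1 : S.IsCompl b c) (h2 : S.IsCompl b' c') (a a' : X) :
    S.mul a c ≤ S.add a' c' ↔ S.mul a b' ≤ S.add b a' := by
  have e1 : S.add a' c' = S.add c' a' := S.add_comm _ _
  rw [e1, ← S.res h2.symm (S.mul a c) a']
  have e2 : S.mul (S.mul a c) b' = S.mul (S.mul a b') c := by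
    rw [S.mul_assoc, S.mul_comm c b', ← S.mul_assoc]
  rw [e2, S.res h1 (S.mul a b') a']

/-- Commutative Δ₁-extensions are essential: any monotone bimonoid
homomorphism `h : B → C` whose composite with `ι` is an order embedding is
itself an order embedding. -/
theorem deltaOneExt_essential {A B C : Type*}
    [PartialOrder A] [PartialOrder B] [PartialOrder C]
    (SA : CommBimonoidOn A) (SB : CommBimonoidOn B) (SC : CommBimonoidOn C)
    (ι : A → B) (hext : IsDeltaOneExt SA SB ι)
    (h : B → C)
    (hmono : ∀ x y : B, x ≤ y → h x ≤ h y)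
    (hmul : ∀ x y : B, h (SB.mul x y) = SC.mul (h x) (h y))
    (hone : h SB.one = SC.one)
    (hadd : ∀ x y : B, h (SB.add x y) = SC.add (h x) (h y))
    (hzero : h SB.zero = SC.zero)
    (hcomp : ∀ a a' : A, h (ι a) ≤ h (ι a') → a ≤ a') :
    ∀ x y : B, h x ≤ h y → x ≤ y := by
  intro x y hxy
  obtain ⟨Sx, hSx, hSxgen⟩ := hext.join_dense x
  obtain ⟨Ty, hTy, hTygen⟩ := hext.meet_dense y
  refine hSx.2 (fun s hs => hTy.2 (fun t ht => ?_))
  obtain ⟨a, b, c, hbc, rfl⟩ := hSxgen s hs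
  obtain ⟨a', b', c', hbc', rfl⟩ := hTygen t ht
  -- images of complements are complements
  have hCbc : SC.IsCompl (h (ι b)) (h c) := by
    constructor
    · rw [← hmul, ← hzero]; exact hmono _ _ hbc.1
    · rw [← hone, ← hadd]; exact hmono _ _ hbc.2
  have hCbc' : SC.IsCompl (h (ι b')) (h c') := by
    constructor
    · rw [← hmul, ← hzero]; exact hmono _ _ hbc'.1
    · rw [← hone, ← hadd]; exact hmono _ _ hbc'.2
  -- h s ≤ h t
  have hst : h (SB.mul (ι a) c) ≤ h (SB.add (ι a') c') :=
    le_trans (hmono _ _ (hSx.1 hs)) (le_trans hxy (hmono _ _ (hTy.1 ht)))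
  rw [hmul, hadd] at hst
  have hC := (SC.key hCbc hCbc' (h (ι a)) (h (ι a'))).mp hst
  rw [← hmul, ← hadd, ← hext.map_mul, ← hext.map_add] at hC
  have hA : SA.mul a b' ≤ SA.add b a' := hcomp _ _ hC
  have hB : SB.mul (ι a) (ι b') ≤ SB.add (ι b) (ι a') := by
    rw [← hext.map_mul, ← hext.map_add]
    exact (hext.emb _ _).mp hA
  exact (SB.key hbc hbc' (ι a) (ι a')).mpr hB
end

section
/- Joins below joins: let ι: A → B exhibit B as a commutative Δ₁-extension of A, and let a, b, c, d ∈ A be such that the complements c_b of ι(b) and c_d of ι(d) exist in B. Then ι(a)·c_b ≤ ι(c)·c_d in B if and only if for all x, y ∈ A: x·c ≤ y + d implies x·a ≤ y + b. -/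
namespace CommBimonoidOn

theorem mul_mono_right {B : Type*} [PartialOrder B] (S : CommBimonoidOn B)
    {x y : B} (z : B) (h : x ≤ y) : S.mul z x ≤ S.mul z y := by
  rw [S.mul_comm z x, S.mul_comm z y]; exact S.mul_mono z h

theorem adj {B : Type*} [PartialOrder B] (S : CommBimonoidOn B)
    {e c : B} (hc : S.IsCompl e c) (u v : B) :
    S.mul u c ≤ v ↔ u ≤ S.add v e := by
  constructor
  · intro h
    calc u = S.mul u S.one := (S.mul_one u).symm
    _ ≤ S.mul u (S.add e c) := S.mul_mono_right u hc.2
    _ = S.mul u (S.add c e) := by rw [S.add_comm]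
    _ ≤ S.add (S.mul u c) e := S.hemi ..
    _ ≤ S.add v e := S.add_mono e h
  · intro h
    calc S.mul u c ≤ S.mul (S.add v e) c := S.mul_mono c h
    _ = S.mul c (S.add e v) := by rw [S.mul_comm, S.add_comm]
    _ ≤ S.add (S.mul c e) v := S.hemi ..
    _ ≤ S.add S.zero v := S.add_mono v (by rw [S.mul_comm]; exact hc.1)
    _ = v := by rw [S.add_comm, S.add_zero]

end CommBimonoidOn


/-- Joins below joins: in a commutative Δ₁-extension, `ι a · (ι b)⁻ ≤
ι c · (ι d)⁻` if and only if for all `x, y ∈ A`, `x·c ≤ y + d` implies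
`x·a ≤ y + b`. -/
theorem joins_below_joins {A B : Type*} [PartialOrder A] [PartialOrder B]
    (SA : CommBimonoidOn A) (SB : CommBimonoidOn B) (ι : A → B)
    (hext : IsDeltaOneExt SA SB ι)
    (a b c d : A) (cb cd : B)
    (hcb : SB.IsCompl (ι b) cb) (hcd : SB.IsCompl (ι d) cd) :
    SB.mul (ι a) cb ≤ SB.mul (ι c) cd ↔
      ∀ x y : A, SA.mul x c ≤ SA.add y d → SA.mul x a ≤ SA.add y b := by
  constructor
  · intro h x y hxy
    have hxy' : SB.mul (ι x) (ι c) ≤ SB.add (ι y) (ι d) := by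
      rw [← hext.map_mul, ← hext.map_add, ← hext.emb]; exact hxy
    have h1 : SB.mul (SB.mul (ι x) (ι c)) cd ≤ ι y := (SB.adj hcd _ _).mpr hxy'
    have h2 : SB.mul (SB.mul (ι x) (ι a)) cb ≤ ι y := by
      calc SB.mul (SB.mul (ι x) (ι a)) cb = SB.mul (ι x) (SB.mul (ι a) cb) := SB.mul_assoc ..
      _ ≤ SB.mul (ι x) (SB.mul (ι c) cd) := SB.mul_mono_right _ h
      _ = SB.mul (SB.mul (ι x) (ι c)) cd := (SB.mul_assoc ..).symm
      _ ≤ ι y := h1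
    have h3 : SB.mul (ι x) (ι a) ≤ SB.add (ι y) (ι b) := (SB.adj hcb _ _).mp h2
    rw [hext.emb, hext.map_mul, hext.map_add]; exact h3
  · intro h
    obtain ⟨S, hS, hmem⟩ := hext.meet_dense (SB.mul (ι c) cd)
    refine hS.2 (fun s hs => ?_)
    obtain ⟨y', b', c', hc', rfl⟩ := hmem s hs
    have hts : SB.mul (ι c) cd ≤ SB.add (ι y') c' := hS.1 hs
    have h1 : ι c ≤ SB.add (SB.add (ι y') c') (ι d) := (SB.adj hcd _ _).mp hts
    rw [SB.add_comm (ι y') c', SB.add_assoc] at h1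
    have h2 : SB.mul (ι b') (ι c) ≤ SB.add (ι y') (ι d) := by
      calc SB.mul (ι b') (ι c)
          ≤ SB.mul (ι b') (SB.add c' (SB.add (ι y') (ι d))) := SB.mul_mono_right _ h1
      _ ≤ SB.add (SB.mul (ι b') c') (SB.add (ι y') (ι d)) := SB.hemi ..
      _ ≤ SB.add SB.zero (SB.add (ι y') (ι d)) := SB.add_mono _ hc'.1
      _ = SB.add (ι y') (ι d) := by rw [SB.add_comm, SB.add_zero]
    have h3 : SA.mul b' c ≤ SA.add y' d := by
      rw [hext.emb, hext.map_mul, hext.map_add]; exact h2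
    have h5 : SB.mul (ι b') (ι a) ≤ SB.add (ι y') (ι b) := by
      rw [← hext.map_mul, ← hext.map_add, ← hext.emb]; exact h b' y' h3
    have h6 : SB.mul (SB.mul (ι b') (ι a)) cb ≤ ι y' := (SB.adj hcb _ _).mpr h5
    calc SB.mul (ι a) cb = SB.mul (SB.mul (ι a) cb) SB.one := (SB.mul_one _).symm
    _ ≤ SB.mul (SB.mul (ι a) cb) (SB.add (ι b') c') := SB.mul_mono_right _ hc'.2
    _ ≤ SB.add (SB.mul (SB.mul (ι a) cb) (ι b')) c' := SB.hemi ..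
    _ = SB.add (SB.mul (SB.mul (ι b') (ι a)) cb) c' := by
        rw [SB.mul_comm (SB.mul (ι a) cb) (ι b'), ← SB.mul_assoc]
    _ ≤ SB.add (ι y') c' := SB.add_mono c' h6
end

section
/- In a commutative residuated bimonoid A, for all a, b, x, y ∈ A the following two conditions are equivalent: (1) for all p, q, u, v ∈ A, if u·y ≤ v + x and a·q ≤ b + p then u·q ≤ v + p; (2) for all p, q ∈ A, (a → (b + p)) · (y → (x + q)) ≤ p + q. -/
/-- In a commutative residuated bimonoid (with residual `res` of the
multiplication), the quantified implication characterizing `x + ȳ ≤ a·b̄`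
is equivalent to a family of inequalities. -/
theorem residuated_bimonoid_fraction_criterion {A : Type*} [PartialOrder A]
    (S : CommBimonoidOn A) (res : A → A → A)
    (res_law : ∀ x y z : A, S.mul x y ≤ z ↔ y ≤ res x z)
    (a b x y : A) :
    (∀ p q u v : A, S.mul u y ≤ S.add v x → S.mul a q ≤ S.add b p →
        S.mul u q ≤ S.add v p) ↔
    (∀ p q : A, S.mul (res a (S.add b p)) (res y (S.add x q)) ≤ S.add p q) := by
  constructor
  · intro h p q
    have h1 : S.mul (res y (S.add x q)) y ≤ S.add q x := by
      rw [S.mul_comm, S.add_comm q x]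
      exact (res_law y (res y (S.add x q)) (S.add x q)).mpr le_rfl
    have h2 : S.mul a (res a (S.add b p)) ≤ S.add b p :=
      (res_law a (res a (S.add b p)) (S.add b p)).mpr le_rfl
    have := h p (res a (S.add b p)) (res y (S.add x q)) q h1 h2
    rw [S.mul_comm] at this
    rwa [S.add_comm q p] at this
  · intro h p q u v h1 h2
    have hq : q ≤ res a (S.add b p) := (res_law a q (S.add b p)).mp h2
    have hu : u ≤ res y (S.add x v) := by
      apply (res_law y u (S.add x v)).mp
      rw [S.mul_comm, S.add_comm]
      exact h1
    calc S.mul u q ≤ S.mul (res a (S.add b p)) u := by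
          rw [S.mul_comm]; exact S.mul_mono u hq
      _ ≤ S.mul (res a (S.add b p)) (res y (S.add x v)) := by
          rw [S.mul_comm, S.mul_comm (res a (S.add b p))]
          exact S.mul_mono _ hu
      _ ≤ S.add p v := h p v
      _ = S.add v p := S.add_comm p v
end

section
/- Boolean-pointed Brouwerian algebras admit fractions: in a Boolean-pointed Brouwerian algebra, with x + y := (0 ⇨ (x ⊓ y)) ⊓ (x ⊔ y), for all a, b: a ⊓ (a ⇨ b) ≤ b + (0 ⊓ a), and for all p, q: (a ⇨ (b + p)) ⊓ ((a ⇨ b) ⇨ ((0 ⊓ a) + q)) ≤ p + q. -/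
theorem aux_frac {A : Type*} [GeneralizedHeytingAlgebra A] (z0 : A)
    (hbp : ∀ x : A, x ⊔ (x ⇨ z0) = ⊤) (a b p q : A) :
    (a ⇨ ((z0 ⇨ (b ⊓ p)) ⊓ (b ⊔ p))) ⊓
      ((a ⇨ b) ⇨ ((z0 ⇨ (z0 ⊓ a ⊓ q)) ⊓ ((z0 ⊓ a) ⊔ q)))
      ≤ (z0 ⇨ (p ⊓ q)) ⊓ (p ⊔ q) := by
  set B := (z0 ⇨ (b ⊓ p)) ⊓ (b ⊔ p) with hB
  set C := (z0 ⇨ (z0 ⊓ a ⊓ q)) ⊓ ((z0 ⊓ a) ⊔ q) with hC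
  set c := a ⇨ b with hc
  set L := (a ⇨ B) ⊓ (c ⇨ C) with hL
  have hBz : B ⊓ z0 ≤ b ⊓ p :=
    (inf_le_inf_right _ inf_le_left).trans himp_inf_le
  have hCz : C ⊓ z0 ≤ z0 ⊓ a ⊓ q :=
    (inf_le_inf_right _ inf_le_left).trans himp_inf_le
  have hLa : L ⊓ a ≤ B := (inf_le_inf_right _ inf_le_left).trans himp_inf_le
  have hLcC : L ⊓ c ≤ C := (inf_le_inf_right _ inf_le_right).trans himp_inf_le
  have key1 : L ⊓ z0 ⊓ a ≤ b ⊓ p := by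
    have h1 : L ⊓ z0 ⊓ a ≤ B ⊓ z0 :=
      le_inf ((le_inf (inf_le_left.trans inf_le_left) inf_le_right).trans hLa)
        (inf_le_left.trans inf_le_right)
    exact h1.trans hBz
  have hLc : L ⊓ z0 ≤ c := le_himp_iff.2 (key1.trans inf_le_left)
  have hLC : L ⊓ z0 ≤ z0 ⊓ a ⊓ q :=
    (le_inf ((le_inf inf_le_left hLc).trans hLcC) inf_le_right).trans hCz
  have hkey : L ⊓ z0 ≤ p ⊓ q := by
    have ha : L ⊓ z0 ≤ a := hLC.trans (inf_le_left.trans inf_le_right)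
    have hp : L ⊓ z0 ≤ p := ((le_inf le_rfl ha).trans key1).trans inf_le_right
    exact le_inf hp (hLC.trans inf_le_right)
  refine le_inf (le_himp_iff.2 hkey) ?_
  -- L ≤ p ⊔ q
  have hsplit : L = (L ⊓ a) ⊔ (L ⊓ (a ⇨ z0)) := by
    rw [← inf_sup_left, hbp a, inf_top_eq]
  rw [hsplit]
  refine sup_le ?_ ?_
  · -- L ⊓ a ≤ p ⊔ q
    have h1 : L ⊓ a ≤ b ⊔ p := hLa.trans inf_le_right
    have h2 : L ⊓ a ⊓ b ≤ (z0 ⊓ a) ⊔ q := by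
      have hb : L ⊓ a ⊓ b ≤ c := inf_le_right.trans le_himp
      exact ((le_inf (inf_le_left.trans inf_le_left) hb).trans hLcC).trans inf_le_right
    have h3 : L ⊓ a ⊓ b ≤ p ⊔ q := by
      have : L ⊓ a ⊓ b ≤ ((L ⊓ a ⊓ b) ⊓ (z0 ⊓ a)) ⊔ ((L ⊓ a ⊓ b) ⊓ q) := by
        rw [← inf_sup_left]; exact le_inf le_rfl h2
      refine this.trans (sup_le ?_ (inf_le_right.trans le_sup_right))
      have : (L ⊓ a ⊓ b) ⊓ (z0 ⊓ a) ≤ L ⊓ z0 :=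
        le_inf (inf_le_left.trans (inf_le_left.trans inf_le_left))
          (inf_le_right.trans inf_le_left)
      exact ((this.trans hkey).trans inf_le_left).trans le_sup_left
    have : L ⊓ a ≤ ((L ⊓ a) ⊓ b) ⊔ ((L ⊓ a) ⊓ p) := by
      rw [← inf_sup_left]; exact le_inf le_rfl h1
    exact this.trans (sup_le h3 (inf_le_right.trans le_sup_left))
  · -- L ⊓ (a ⇨ z0) ≤ q ≤ p ⊔ q
    have hc2 : L ⊓ (a ⇨ z0) ≤ c := by
      refine le_himp_iff.2 ?_
      have hz : L ⊓ (a ⇨ z0) ⊓ a ≤ z0 := (inf_le_inf_right _ inf_le_right).trans himp_inf_le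
      have : L ⊓ (a ⇨ z0) ⊓ a ≤ L ⊓ z0 ⊓ a :=
        le_inf (le_inf (inf_le_left.trans inf_le_left) hz) inf_le_right
      exact (this.trans key1).trans inf_le_left
    have hC2 : L ⊓ (a ⇨ z0) ≤ (z0 ⊓ a) ⊔ q := by
      exact ((le_inf inf_le_left hc2).trans hLcC).trans inf_le_right
    have : L ⊓ (a ⇨ z0) ≤ ((L ⊓ (a ⇨ z0)) ⊓ (z0 ⊓ a)) ⊔ ((L ⊓ (a ⇨ z0)) ⊓ q) := by
      rw [← inf_sup_left]; exact le_inf le_rfl hC2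
    refine (this.trans (sup_le ?_ (inf_le_right.trans le_sup_right)))
    have h4 : (L ⊓ (a ⇨ z0)) ⊓ (z0 ⊓ a) ≤ L ⊓ z0 :=
      le_inf (inf_le_left.trans inf_le_left) (inf_le_right.trans inf_le_left)
    exact ((h4.trans hkey).trans inf_le_right).trans le_sup_right

/-- Boolean-pointed Brouwerian algebras admit fractions: with
`x + y := (z0 ⇨ (x ⊓ y)) ⊓ (x ⊔ y)`, we have `a ⊓ (a ⇨ b) ≤ b + (z0 ⊓ a)`
and `(a ⇨ (b + p)) ⊓ ((a ⇨ b) ⇨ ((z0 ⊓ a) + q)) ≤ p + q`. -/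
theorem boolean_pointed_brouwerian_fractions {A : Type*}
    [GeneralizedHeytingAlgebra A] (z0 : A)
    (hbp : ∀ x : A, x ⊔ (x ⇨ z0) = ⊤) :
    let add : A → A → A := fun x y => (z0 ⇨ (x ⊓ y)) ⊓ (x ⊔ y)
    ∀ a b : A,
      a ⊓ (a ⇨ b) ≤ add b (z0 ⊓ a) ∧
      ∀ p q : A,
        (a ⇨ add b p) ⊓ ((a ⇨ b) ⇨ add (z0 ⊓ a) q) ≤ add p q := by
  intro add a b
  have hab : a ⊓ (a ⇨ b) ≤ b := by rw [inf_himp]; exact inf_le_right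
  constructor
  · refine le_inf (le_himp_iff.2 ?_) (hab.trans le_sup_left)
    exact le_inf (inf_le_left.trans hab)
      (le_inf inf_le_right (inf_le_left.trans inf_le_left))
  · intro p q
    exact aux_frac z0 hbp a b p q
end

section
/- In a cancellative divisible integral commutative residuated lattice, the identity a → (b·x) = (b → a) → ((a → b)·x) holds for all a, b, x. -/
/-- In a cancellative divisible integral commutative residuated lattice,
`a → (b·x) = (b → a) → ((a → b)·x)`. -/
theorem cancellative_divisible_integral_identity {A : Type*} [Lattice A]
    [CommMonoid A]
    (mul_mono : ∀ {x y : A} (z : A), x ≤ y → x * z ≤ y * z)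
    (res : A → A → A)
    (res_law : ∀ x y z : A, x * y ≤ z ↔ y ≤ res x z)
    (integral : ∀ x : A, x ≤ 1)
    (divisible : ∀ x y : A, x * res x y = x ⊓ y)
    (cancel : ∀ x y z : A, x * y = x * z → y = z)
    (a b x : A) :
    res a (b * x) = res (res b a) (res a b * x) := by
  have mono : ∀ (z : A) {x y : A}, x ≤ y → z * x ≤ z * y := by
    intro z x y h
    calc z * x = x * z := mul_comm _ _
    _ ≤ y * z := mul_mono z h
    _ = z * y := mul_comm _ _
  have le_left : ∀ x y : A, x * y ≤ x := by
    intro x y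
    calc x * y = y * x := mul_comm _ _
    _ ≤ 1 * x := mul_mono x (integral y)
    _ = x := one_mul x
  have l1 : ∀ z y : A, res z (z * y) = y := by
    intro z y
    apply cancel z
    rw [divisible z (z * y), inf_eq_right.mpr (le_left z y)]
  have ordc : ∀ z u v : A, z * u ≤ z * v → u ≤ v := by
    intro z u v h
    have := (res_law z u (z * v)).mp h
    rwa [l1] at this
  have dist : ∀ z x y : A, z * (x ⊓ y) = z * x ⊓ z * y := by
    intro z x y
    apply le_antisymm
    · exact le_inf (mono z inf_le_left) (mono z inf_le_right)
    · have hd := divisible (z * x) (z * y)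
      set t := res (z * x) (z * y) with ht
      have h1 : z * x * t ≤ z * y := by rw [hd]; exact inf_le_right
      have h2 : x * t ≤ y := ordc z _ _ (by rw [← mul_assoc]; exact h1)
      have h3 : x * t ≤ x := le_left x t
      have h4 : z * x * t ≤ z * (x ⊓ y) := by
        rw [mul_assoc]; exact mono z (le_inf h3 h2)
      rw [← hd]; exact h4
  set c := res a b with hc
  set d := res b a with hd
  have hac : a * c = a ⊓ b := divisible a b
  have hbd : d * b = a ⊓ b := by rw [mul_comm, divisible b a, inf_comm]
  apply cancel (a * d)
  calc a * d * res a (b * x)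
      = d * (a * res a (b * x)) := by rw [mul_comm a d, mul_assoc]
    _ = d * (a ⊓ b * x) := by rw [divisible]
    _ = d * a ⊓ d * (b * x) := dist d a (b * x)
    _ = a * d ⊓ a * (c * x) := by
        rw [mul_comm d a, ← mul_assoc, hbd, ← hac, mul_assoc]
    _ = a * (d ⊓ c * x) := (dist a d (c * x)).symm
    _ = a * (d * res d (c * x)) := by rw [divisible]
    _ = a * d * res d (c * x) := by rw [mul_assoc]
end

section
/- Let A be a commutative bimonoid, let b be the complement of a in A, and let n ≥ 1. Then b ≤ bⁿ if and only if n·a ≤ a, where bⁿ denotes the n-fold product b·…·b and n·a denotes the n-fold sum a+…+a. -/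
/-- The `n`-fold product `x·…·x` in a commutative bimonoid (with `x⁰ = 1`). -/
def CommBimonoidOn.pow {A : Type*} [PartialOrder A]
    (S : CommBimonoidOn A) (x : A) : ℕ → A
  | 0 => S.one
  | n + 1 => S.mul x (S.pow x n)

/-- The `n`-fold sum `x+…+x` in a commutative bimonoid (with `0·x = 0`). -/
def CommBimonoidOn.nsum {A : Type*} [PartialOrder A]
    (S : CommBimonoidOn A) (x : A) : ℕ → A
  | 0 => S.zero
  | n + 1 => S.add x (S.nsum x n)

/-- One direction: if `n·a ≤ a` then `b ≤ bⁿ`. -/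
theorem compl_nsum_imp_pow {A : Type*} [PartialOrder A]
    (S : CommBimonoidOn A) (a b : A) (hb : S.IsCompl a b)
    (n : ℕ) (hn : 1 ≤ n) (h : S.nsum a n ≤ a) : b ≤ S.pow b n := by
  obtain ⟨m, rfl⟩ : ∃ m, n = m + 1 := ⟨n - 1, (Nat.succ_pred_eq_of_pos hn).symm⟩
  have addr : ∀ (z : A) {x y : A}, x ≤ y → S.add z x ≤ S.add z y := by
    intro z x y hxy
    rw [S.add_comm z x, S.add_comm z y]; exact S.add_mono z hxy
  have mulr : ∀ (z : A) {x y : A}, x ≤ y → S.mul z x ≤ S.mul z y := by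
    intro z x y hxy
    rw [S.mul_comm z x, S.mul_comm z y]; exact S.mul_mono z hxy
  have F1 : ∀ x, S.mul b (S.add a x) ≤ x := by
    intro x
    calc S.mul b (S.add a x) ≤ S.add (S.mul b a) x := S.hemi b a x
    _ ≤ S.add S.zero x := S.add_mono x (by rw [S.mul_comm]; exact hb.1)
    _ = x := by rw [S.add_comm, S.add_zero]
  have F2 : ∀ x : A, x ≤ S.add a (S.mul b x) := by
    intro x
    calc x = S.mul x S.one := (S.mul_one x).symm
    _ ≤ S.mul x (S.add b a) := mulr x (by rw [S.add_comm]; exact hb.2)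
    _ ≤ S.add (S.mul x b) a := S.hemi x b a
    _ = S.add a (S.mul b x) := by rw [S.add_comm, S.mul_comm]
  have G : ∀ k, b ≤ S.add (S.nsum a k) (S.pow b (k+1)) := by
    intro k
    induction k with
    | zero =>
        simp only [CommBimonoidOn.nsum, CommBimonoidOn.pow]
        rw [S.mul_one, S.add_comm, S.add_zero]
    | succ k ih =>
        calc b ≤ S.add (S.nsum a k) (S.pow b (k+1)) := ih
        _ ≤ S.add (S.nsum a k) (S.add a (S.mul b (S.pow b (k+1)))) :=
            addr _ (F2 (S.pow b (k+1)))
        _ = S.add (S.nsum a (k+1)) (S.pow b (k+2)) := by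
            show S.add (S.nsum a k) (S.add a (S.mul b (S.pow b (k+1))))
              = S.add (S.add a (S.nsum a k)) (S.mul b (S.pow b (k+1)))
            rw [← S.add_assoc, S.add_comm (S.nsum a k) a]
  have h1 : S.one ≤ S.add a (S.pow b (m+1)) := by
    calc S.one ≤ S.add a b := hb.2
    _ ≤ S.add a (S.add (S.nsum a m) (S.pow b (m+1))) := addr a (G m)
    _ = S.add (S.nsum a (m+1)) (S.pow b (m+1)) := by
        show S.add a (S.add (S.nsum a m) (S.pow b (m+1)))
          = S.add (S.add a (S.nsum a m)) (S.pow b (m+1))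
        rw [S.add_assoc]
    _ ≤ S.add a (S.pow b (m+1)) := S.add_mono _ h
  calc b = S.mul b S.one := (S.mul_one b).symm
  _ ≤ S.mul b (S.add a (S.pow b (m+1))) := mulr b h1
  _ ≤ S.pow b (m+1) := F1 _

/-- The order-dual bimonoid: swap multiplication and addition. -/
def CommBimonoidOn.op {A : Type*} [PartialOrder A]
    (S : CommBimonoidOn A) : CommBimonoidOn Aᵒᵈ where
  mul := S.add
  add := S.mul
  one := S.zero
  zero := S.one
  mul_assoc := S.add_assoc
  mul_comm := S.add_comm
  mul_one := S.add_zero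
  add_assoc := S.mul_assoc
  add_comm := S.mul_comm
  add_zero := S.mul_one
  mul_mono := fun z h => S.add_mono z h
  add_mono := fun z h => S.mul_mono z h
  hemi := fun x y z => by
    show S.mul (S.add x y) z ≤ S.add x (S.mul y z)
    calc S.mul (S.add x y) z = S.mul z (S.add y x) := by
          rw [S.mul_comm (S.add x y) z, S.add_comm x y]
    _ ≤ S.add (S.mul z y) x := S.hemi z y x
    _ = S.add x (S.mul y z) := by rw [S.add_comm (S.mul z y) x, S.mul_comm z y]

theorem CommBimonoidOn.op_pow {A : Type*} [PartialOrder A]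
    (S : CommBimonoidOn A) (x : A) (n : ℕ) :
    S.op.pow x n = S.nsum x n := by
  induction n with
  | zero => rfl
  | succ n ih => show S.add x (S.op.pow x n) = S.add x (S.nsum x n); rw [ih]

theorem CommBimonoidOn.op_nsum {A : Type*} [PartialOrder A]
    (S : CommBimonoidOn A) (x : A) (n : ℕ) :
    S.op.nsum x n = S.pow x n := by
  induction n with
  | zero => rfl
  | succ n ih => show S.mul x (S.op.nsum x n) = S.mul x (S.pow x n); rw [ih]

/-- If `b` is the complement of `a` in a commutative bimonoid and `n ≥ 1`,
then `b ≤ bⁿ` if and only if `n·a ≤ a`. -/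
theorem compl_pow_iff_nsum {A : Type*} [PartialOrder A]
    (S : CommBimonoidOn A) (a b : A) (hb : S.IsCompl a b)
    (n : ℕ) (hn : 1 ≤ n) :
    b ≤ S.pow b n ↔ S.nsum a n ≤ a := by
  have hb' : S.op.IsCompl (b : Aᵒᵈ) (a : Aᵒᵈ) := by
    constructor
    · show S.one ≤ S.add b a
      rw [S.add_comm]; exact hb.2
    · show S.mul b a ≤ S.zero
      rw [S.mul_comm]; exact hb.1
  constructor
  · intro h
    have := compl_nsum_imp_pow S.op b a hb' n hn
      (by show b ≤ S.op.nsum b n; rw [S.op_nsum]; exact h)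
    rw [S.op_pow] at this
    exact this
  · exact compl_nsum_imp_pow S a b hb n hn
end
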